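/- For all d ≥ 1 and n ≥ 3, the affine hull (affine span over ℝ) of the full cyclic transversal polytope CTP[d,n] is exactly the affine subspace { x ∈ ℝ^{B(d,n)} : Σ_{ω ∈ 𝔽₂^d} x^i_ω = 1 for every i ∈ [n] } described by the n transversal equations. -/
import Mathlib


open scoped Classical

/-- The field `𝔽₂^d`, represented as functions `Fin d → ZMod 2`. -/
abbrev F2 (d : ℕ) : Type := Fin d → ZMod 2

/-- A cyclic transversal of a block configuration `B`. -/
def IsCyclicTransversal {d n : ℕ} (B : Fin n → Set (F2 d)) (ξ : Fin n → F2 d) : Prop :=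
  (∀ i, ξ i ∈ B i) ∧ (∑ i, ξ i) = 0

/-- The incidence vector of a transversal. -/
noncomputable def incVec {d n : ℕ} (ξ : Fin n → F2 d) : Fin n → F2 d → ℝ :=
  fun i ω => if ξ i = ω then 1 else 0

/-- The cyclic transversal polytope of a block configuration. -/
noncomputable def CTP {d n : ℕ} (B : Fin n → Set (F2 d)) : Set (Fin n → F2 d → ℝ) :=
  convexHull ℝ (incVec '' { ξ | IsCyclicTransversal B ξ })

/-- The transversal polytope of a block configuration. -/
def TP {d n : ℕ} (B : Fin n → Set (F2 d)) : Set (Fin n → F2 d → ℝ) :=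
  { x | (∀ i ω, 0 ≤ x i ω) ∧ (∀ i ω, ω ∉ B i → x i ω = 0) ∧ ∀ i, (∑ ω : F2 d, x i ω) = 1 }

/-- The size of a block configuration. -/
noncomputable def blockSize {d n : ℕ} (B : Fin n → Set (F2 d)) : ℕ := ∑ i, (B i).ncard

/-- The rank of a block configuration. -/
noncomputable def blockRank {d n : ℕ} (B : Fin n → Set (F2 d)) : ℕ :=
  Module.finrank (ZMod 2) (Submodule.span (ZMod 2) (⋃ i, B i))

/-- Two sets of real vectors are affinely isomorphic. -/
def AffIso {α β : Type*} [AddCommGroup α] [Module ℝ α] [AddCommGroup β] [Module ℝ β]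
    (P : Set α) (Q : Set β) : Prop :=
  ∃ f : α →ᵃ[ℝ] β, Set.InjOn f P ∧ f '' P = Q

/-- The left-hand side of the lifted odd-set (LOS) inequality associated with `η` and `I`. -/
noncomputable def losLHS {d n : ℕ} (B : Fin n → Set (F2 d)) (η : F2 d) (I : Finset (Fin n))
    (x : Fin n → F2 d → ℝ) : ℝ :=
  (∑ i ∈ I, ∑ ω ∈ Finset.univ.filter (fun ω : F2 d => ω ∈ B i ∧ (∑ j, η j * ω j) = 0), x i ω) +
  (∑ i ∈ Iᶜ, ∑ ω ∈ Finset.univ.filter (fun ω : F2 d => ω ∈ B i ∧ (∑ j, η j * ω j) = 1), x i ω)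

namespace St6

variable {d n : ℕ}

lemma f2_add_self (ω : F2 d) : ω + ω = 0 := by
  funext j
  have h : ∀ a : ZMod 2, a + a = 0 := by decide
  exact h _

/-- pair transversal supported on `{i,j}` with value `ω`. -/
def pairT (i j : Fin n) (ω : F2 d) : Fin n → F2 d :=
  fun m => if m = i then ω else if m = j then ω else 0

lemma pairT_left (i j : Fin n) (ω : F2 d) : pairT i j ω i = ω := by simp [pairT]

lemma pairT_right (i j : Fin n) (h : j ≠ i) (ω : F2 d) : pairT i j ω j = ω := by
  simp [pairT, h]

lemma pairT_other {i j m : Fin n} (h1 : m ≠ i) (h2 : m ≠ j) (ω : F2 d) :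
    pairT i j ω m = 0 := by simp [pairT, h1, h2]

lemma pairT_cyclic (i j : Fin n) (hij : i ≠ j) (ω : F2 d) :
    IsCyclicTransversal (fun _ : Fin n => (Set.univ : Set (F2 d))) (pairT i j ω) := by
  refine ⟨fun _ => trivial, ?_⟩
  have key : ∀ m : Fin n, pairT i j ω m
      = (if m = i then ω else 0) + (if m = j then ω else 0) := by
    intro m
    by_cases h1 : m = i
    · subst h1; rw [pairT_left, if_pos rfl, if_neg hij, add_zero]
    · by_cases h2 : m = j
      · subst h2
        rw [pairT_right _ _ (Ne.symm hij), if_neg h1, if_pos rfl, zero_add]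
      · rw [pairT_other h1 h2, if_neg h1, if_neg h2, add_zero]
  rw [Finset.sum_congr rfl (fun m _ => key m), Finset.sum_add_distrib]
  simp [f2_add_self]

/-- the elementary direction vector. -/
noncomputable def gVec (i : Fin n) (ω : F2 d) : Fin n → F2 d → ℝ :=
  fun m υ => if m = i then (if ω = υ then (1:ℝ) else 0) - (if (0:F2 d) = υ then 1 else 0) else 0

lemma gVec_mem (hn : 3 ≤ n) (i : Fin n) (ω : F2 d) :
    gVec i ω ∈ vectorSpan ℝ
      (incVec '' {ξ : Fin n → F2 d | IsCyclicTransversal (fun _ => Set.univ) ξ}) := by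
  have hcard : 1 < (Finset.univ.erase i).card := by
    rw [Finset.card_erase_of_mem (Finset.mem_univ i), Finset.card_univ, Fintype.card_fin]
    omega
  obtain ⟨j, k, hj, hk, hjk⟩ := Finset.one_lt_card_iff.mp hcard
  have hji : j ≠ i := (Finset.mem_erase.mp hj).1
  have hki : k ≠ i := (Finset.mem_erase.mp hk).1
  set S := incVec '' {ξ : Fin n → F2 d | IsCyclicTransversal (fun _ => Set.univ) ξ} with hS
  have mem1 : incVec (pairT i j ω) ∈ S := ⟨_, pairT_cyclic i j hji.symm ω, rfl⟩
  have mem2 : incVec (pairT j k ω) ∈ S := ⟨_, pairT_cyclic j k hjk ω, rfl⟩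
  have mem3 : incVec (pairT i k ω) ∈ S := ⟨_, pairT_cyclic i k hki.symm ω, rfl⟩
  have mem0 : incVec (fun _ : Fin n => (0 : F2 d)) ∈ S := by
    refine ⟨_, ⟨fun _ => trivial, by simp⟩, rfl⟩
  have hv : incVec (pairT i j ω) -ᵥ incVec (pairT j k ω) ∈ vectorSpan ℝ S :=
    vsub_mem_vectorSpan ℝ mem1 mem2
  have hw : incVec (pairT i k ω) -ᵥ incVec (fun _ : Fin n => (0 : F2 d)) ∈ vectorSpan ℝ S :=
    vsub_mem_vectorSpan ℝ mem3 mem0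
  have key : gVec i ω = (1/2 : ℝ) •
      ((incVec (pairT i j ω) -ᵥ incVec (pairT j k ω)) +
       (incVec (pairT i k ω) -ᵥ incVec (fun _ : Fin n => (0 : F2 d)))) := by
    funext m υ
    simp only [vsub_eq_sub, Pi.smul_apply, Pi.add_apply, Pi.sub_apply, smul_eq_mul, gVec, incVec]
    by_cases hmi : m = i
    · subst hmi
      rw [pairT_left, pairT_other (Ne.symm hji) (Ne.symm hki), pairT_left, if_pos rfl]
      ring
    · by_cases hmj : m = j
      · subst hmj
        rw [pairT_right _ _ hji, pairT_left, pairT_other hji hjk, if_neg hmi]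
        ring
      · by_cases hmk : m = k
        · subst hmk
          rw [pairT_other hki (Ne.symm hjk), pairT_right _ _ (Ne.symm hjk),
            pairT_right _ _ hki, if_neg hmi]
          ring
        · rw [pairT_other hmi hmj, pairT_other hmj hmk, pairT_other hmi hmk, if_neg hmi]
          ring
  rw [key]
  exact Submodule.smul_mem _ _ (Submodule.add_mem _ hv hw)

end St6

/-- the affine hull of the full CTP is given by the transversal equations. -/
theorem statement6 (d n : ℕ) (hd : 1 ≤ d) (hn : 3 ≤ n) :
    (affineSpan ℝ (CTP (fun _ : Fin n => (Set.univ : Set (F2 d)))) : Set (Fin n → F2 d → ℝ))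
      = { x : Fin n → F2 d → ℝ | ∀ i, (∑ ω : F2 d, x i ω) = 1 } := by
  classical
  set S := incVec '' {ξ : Fin n → F2 d | IsCyclicTransversal (fun _ => Set.univ) ξ} with hS
  set Q : AffineSubspace ℝ (Fin n → F2 d → ℝ) :=
    { carrier := { x | ∀ i, (∑ ω : F2 d, x i ω) = 1 }
      smul_vsub_vadd_mem' := by
        intro c p₁ p₂ p₃ h₁ h₂ h₃ i
        have key : (∑ ω : F2 d, (c • (p₁ -ᵥ p₂) +ᵥ p₃) i ω)
            = c * ((∑ ω : F2 d, p₁ i ω) - ∑ ω : F2 d, p₂ i ω) + ∑ ω : F2 d, p₃ i ω := by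
          simp only [vsub_eq_sub, vadd_eq_add, Pi.add_apply, Pi.smul_apply, Pi.sub_apply,
            smul_eq_mul]
          rw [Finset.sum_add_distrib, ← Finset.mul_sum, ← Finset.sum_sub_distrib]
        rw [key, h₁ i, h₂ i, h₃ i]; ring } with hQ
  apply Set.Subset.antisymm
  · -- forward inclusion
    have h1 : CTP (fun _ : Fin n => (Set.univ : Set (F2 d))) ⊆ (Q : Set _) := by
      apply convexHull_min ?_ (AffineSubspace.convex _)
      rintro x ⟨ξ, hξ, rfl⟩ i
      simp [incVec, Finset.sum_ite_eq]
    intro y hy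
    exact affineSpan_le.mpr h1 hy
  · -- reverse inclusion
    intro x hx
    have hxeq : ∀ i, (∑ ω : F2 d, x i ω) = 1 := hx
    have mem0 : incVec (fun _ : Fin n => (0 : F2 d)) ∈ S := by
      refine ⟨_, ⟨fun _ => trivial, by simp⟩, rfl⟩
    have hsub : S ⊆ CTP (fun _ : Fin n => (Set.univ : Set (F2 d))) := by
      rw [hS]; exact subset_convexHull ℝ _
    suffices hxS : x ∈ affineSpan ℝ S from affineSpan_mono ℝ hsub hxS
    have hp0 : incVec (fun _ : Fin n => (0 : F2 d)) ∈ affineSpan ℝ S :=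
      mem_affineSpan ℝ mem0
    rw [← AffineSubspace.vsub_right_mem_direction_iff_mem hp0 x, direction_affineSpan]
    have hdecomp : x -ᵥ incVec (fun _ : Fin n => (0 : F2 d))
        = ∑ i : Fin n, ∑ ω : F2 d, x i ω • St6.gVec i ω := by
      funext m υ
      simp only [vsub_eq_sub, Pi.sub_apply, Finset.sum_apply, Pi.smul_apply, smul_eq_mul,
        St6.gVec, incVec]
      rw [Finset.sum_eq_single m]
      · have step : ∀ ω : F2 d, x m ω *
            (if m = m then ((if ω = υ then (1:ℝ) else 0) - (if (0:F2 d) = υ then 1 else 0))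
              else 0)
            = (if ω = υ then x m ω else 0) - x m ω * (if (0:F2 d) = υ then 1 else 0) := by
          intro ω
          rw [if_pos rfl]
          by_cases h : ω = υ <;> by_cases h0 : (0:F2 d) = υ <;> simp [h, h0] <;> ring
        rw [Finset.sum_congr rfl (fun ω _ => step ω), Finset.sum_sub_distrib,
          Finset.sum_ite_eq' Finset.univ υ (fun ω => x m ω), ← Finset.sum_mul, hxeq m]
        simp
      · intro b _ hbm
        apply Finset.sum_eq_zero
        intro ω _
        rw [if_neg (Ne.symm hbm), mul_zero]
      · intro h; exact absurd (Finset.mem_univ m) h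
    rw [hdecomp]
    exact Submodule.sum_mem _ fun i _ =>
      Submodule.sum_mem _ fun ω _ => Submodule.smul_mem _ _ (St6.gVec_mem hn i ω)
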